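/- Let D be an integral domain with quotient field K, p ∈ D[X] monic of degree n, and C_p ∈ M_n(D) the companion matrix of p. Then Int(D[C_p], M_n(D)) = Int(D[C_p], D[C_p]); that is, a polynomial f ∈ K[X] satisfies f(N) ∈ M_n(D) for every N ∈ D[C_p] if and only if f(N) ∈ D[C_p] for every N ∈ D[C_p]. -/

import Mathlib

/-- The companion matrix of a monic polynomial `p` of degree `n`: ones on the subdiagonal
and `-p.coeff i` as the `i`-th entry of the last column. -/
def companionMatrix {D : Type*} [CommRing D] (n : ℕ) (p : Polynomial D) :
    Matrix (Fin n) (Fin n) D :=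
  Matrix.of fun i j =>
    if (j : ℕ) = n - 1 then -p.coeff i else if (i : ℕ) = (j : ℕ) + 1 then 1 else 0

open Polynomial Matrix

lemma companion_mulVec {K : Type*} [Field K] {n : ℕ} (hpos : 0 < n) (q : Polynomial K)
    (v : Fin n → K) (i : Fin n) :
    (companionMatrix n q).mulVec v i =
      (if h : (i : ℕ) = 0 then 0 else v ⟨(i : ℕ) - 1, by omega⟩)
        - q.coeff i * v ⟨n - 1, by omega⟩ := by
  classical
  have hi' : (i : ℕ) < n := i.isLt
  set jl : Fin n := ⟨n - 1, by omega⟩ with hjl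
  rw [Matrix.mulVec, dotProduct]
  by_cases hi : (i : ℕ) = 0
  · rw [Finset.sum_eq_single jl]
    · have e1 : companionMatrix n q i jl = -q.coeff i := by simp [companionMatrix, hjl]
      rw [e1, dif_pos hi]; ring
    · intro j _ hj
      have hj' : (j : ℕ) ≠ n - 1 := fun h => hj (Fin.ext h)
      simp [companionMatrix, hj', hi]
    · intro h; exact absurd (Finset.mem_univ jl) h
  · have h1 : 1 ≤ (i : ℕ) := Nat.one_le_iff_ne_zero.mpr hi
    have hn2 : 2 ≤ n := by omega
    set j0 : Fin n := ⟨(i : ℕ) - 1, by omega⟩ with hj0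
    have hne : j0 ≠ jl := Fin.ne_of_val_ne (by show (i:ℕ)-1 ≠ n-1; omega)
    have hsub : ({j0, jl} : Finset (Fin n)) ⊆ Finset.univ := Finset.subset_univ _
    rw [← Finset.sum_subset hsub (fun j _ hj => ?_)]
    · rw [Finset.sum_insert (by simp [hne]), Finset.sum_singleton]
      have e0 : companionMatrix n q i j0 = 1 := by
        have : ((j0 : Fin n) : ℕ) ≠ n - 1 := by simp only [hj0]; omega
        simp [companionMatrix, this, hj0]
        rw [if_neg (by omega), if_pos (by omega)]
      have e1 : companionMatrix n q i jl = -q.coeff i := by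
        simp [companionMatrix, hjl]
      rw [e0, e1, dif_neg hi]
      ring
    · simp only [Finset.mem_insert, Finset.mem_singleton, not_or] at hj
      have h2 : (j : ℕ) ≠ n - 1 := fun h => hj.2 (Fin.ext h)
      have h3 : (i : ℕ) ≠ (j : ℕ) + 1 := by
        intro h
        exact hj.1 (Fin.eq_of_val_eq (by show (j:ℕ) = (i:ℕ)-1; omega))
      simp [companionMatrix, h2, h3]

lemma Xmul_mod {K : Type*} [Field K] {n : ℕ} (hpos : 0 < n) {q : Polynomial K}
    (hq : q.Monic) (hn : q.natDegree = n) {r : Polynomial K} (hr : r.degree < (n : ℕ)) :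
    (X * r) %ₘ q = X * r - C (r.coeff (n - 1)) * q := by
  have hdq : q.degree = (n : ℕ) := by
    rw [Polynomial.degree_eq_natDegree hq.ne_zero, hn]
  set c := r.coeff (n - 1) with hc
  have hdeg : (X * r - C c * q).degree < q.degree := by
    rw [hdq]
    rw [Polynomial.degree_lt_iff_coeff_zero]
    intro m hm
    have hm' : n ≤ m := by exact_mod_cast hm
    rcases Nat.exists_eq_add_of_le hm' with ⟨k, rfl⟩
    have hxr : (X * r).coeff (n + k) = r.coeff (n + k - 1) := by
      have h' : n + k = (n + k - 1) + 1 := by omega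
      rw [h', Polynomial.coeff_X_mul]
      simp
    rcases Nat.eq_zero_or_pos k with rfl | hk
    · have h1 : (X * r).coeff (n + 0) = c := by
        rw [hxr, hc]
        simp
      have h2 : (C c * q).coeff (n + 0) = c := by
        rw [Polynomial.coeff_C_mul]
        have : q.coeff (n + 0) = 1 := by
          have := hq.coeff_natDegree
          rw [hn] at this; simpa using this
        rw [this, mul_one]
      rw [Polynomial.coeff_sub, h1, h2, sub_self]
    · have h1 : (X * r).coeff (n + k) = 0 := by
        rw [hxr]
        apply Polynomial.coeff_eq_zero_of_degree_lt
        refine lt_of_lt_of_le hr ?_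
        have h'' : n ≤ n + k - 1 := by omega
        exact_mod_cast h''
      have h2 : (C c * q).coeff (n + k) = 0 := by
        rw [Polynomial.coeff_C_mul]
        have : q.coeff (n + k) = 0 := by
          apply Polynomial.coeff_eq_zero_of_natDegree_lt
          rw [hn]
          omega
        rw [this, mul_zero]
      rw [Polynomial.coeff_sub, h1, h2, sub_zero]
  have heq : X * r = (X * r - C c * q) + q * C c := by ring
  conv_lhs => rw [heq]
  rw [Polynomial.add_modByMonic, Polynomial.self_mul_modByMonic hq, add_zero,
    (Polynomial.modByMonic_eq_self_iff hq).mpr hdeg]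

lemma X_mul_mod_mod {K : Type*} [Field K] {q : Polynomial K} (hq : q.Monic)
    (s : Polynomial K) : (X * (s %ₘ q)) %ₘ q = (X * s) %ₘ q := by
  conv_rhs => rw [← Polynomial.modByMonic_add_div s q]
  rw [mul_add, Polynomial.add_modByMonic,
    show X * (q * (s /ₘ q)) = q * (X * (s /ₘ q)) by ring,
    Polynomial.self_mul_modByMonic hq, add_zero]

lemma step_mulVec {K : Type*} [Field K] {n : ℕ} (hpos : 0 < n) {q : Polynomial K}
    (hq : q.Monic) (hn : q.natDegree = n) {r : Polynomial K} (hr : r.degree < (n : ℕ)) :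
    (companionMatrix n q).mulVec (fun i => r.coeff i) =
      fun i : Fin n => ((X * r) %ₘ q).coeff (i : ℕ) := by
  funext i
  rw [companion_mulVec hpos, Xmul_mod hpos hq hn hr]
  rw [Polynomial.coeff_sub, Polynomial.coeff_C_mul]
  by_cases hi : (i : ℕ) = 0
  · rw [dif_pos hi]
    have : (X * r).coeff (i : ℕ) = 0 := by rw [hi, Polynomial.coeff_X_mul_zero]
    rw [this]
    ring
  · rw [dif_neg hi]
    have h' : (i : ℕ) = ((i : ℕ) - 1) + 1 := by omega
    have : (X * r).coeff (i : ℕ) = r.coeff ((i : ℕ) - 1) := by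
      rw [h', Polynomial.coeff_X_mul]
      simp
    rw [this]
    ring

lemma col0 {K : Type*} [Field K] {n : ℕ} (hpos : 0 < n) {q : Polynomial K}
    (hq : q.Monic) (hn : q.natDegree = n) (f : Polynomial K) :
    (Polynomial.aeval (companionMatrix n q) f).mulVec (Pi.single ⟨0, hpos⟩ 1) =
      fun i : Fin n => (f %ₘ q).coeff (i : ℕ) := by
  have hdq : q.degree = (n : ℕ) := by
    rw [Polynomial.degree_eq_natDegree hq.ne_zero, hn]
  have hmod : ∀ r : Polynomial K, (r %ₘ q).degree < (n : ℕ) := fun r =>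
    hdq ▸ Polynomial.degree_modByMonic_lt r hq
  induction f using Polynomial.induction_on' with
  | add p r hp hr =>
    rw [map_add, Matrix.add_mulVec, hp, hr, Polynomial.add_modByMonic]
    funext i
    simp [Polynomial.coeff_add]
  | monomial k a =>
    induction k with
    | zero =>
      rw [Polynomial.monomial_zero_left, Polynomial.aeval_C]
      have hmm : (Polynomial.C a) %ₘ q = Polynomial.C a := by
        rw [Polynomial.modByMonic_eq_self_iff hq, hdq]
        exact lt_of_le_of_lt (Polynomial.degree_C_le) (by exact_mod_cast hpos)
      rw [hmm]
      funext i
      rw [Matrix.mulVec_single]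
      rw [Polynomial.coeff_C]
      by_cases hi : (i : ℕ) = 0
      · have : i = ⟨0, hpos⟩ := Fin.ext hi
        subst this
        simp [Matrix.algebraMap_matrix_apply]
      · have hne : i ≠ ⟨0, hpos⟩ := fun h => hi (by rw [h])
        simp [Matrix.algebraMap_matrix_apply, hne, hi]
    | succ k ih =>
      have hXm : (Polynomial.monomial (k+1) a : Polynomial K)
          = Polynomial.X * Polynomial.monomial k a := by
        rw [Polynomial.X_mul_monomial]
      rw [hXm, _root_.map_mul, Polynomial.aeval_X, ← Matrix.mulVec_mulVec, ih]
      rw [step_mulVec hpos hq hn (hmod _), X_mul_mod_mod hq, ← hXm]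

lemma aeval_self_companion {K : Type*} [Field K] {n : ℕ} (hpos : 0 < n) {q : Polynomial K}
    (hq : q.Monic) (hn : q.natDegree = n) :
    Polynomial.aeval (companionMatrix n q) q = 0 := by
  have hdq : q.degree = (n : ℕ) := by
    rw [Polynomial.degree_eq_natDegree hq.ne_zero, hn]
  set M := companionMatrix n q with hM
  ext i j
  have hXj : ((Polynomial.X : Polynomial K) ^ (j : ℕ)) %ₘ q = Polynomial.X ^ (j : ℕ) := by
    rw [Polynomial.modByMonic_eq_self_iff hq, hdq, Polynomial.degree_X_pow]
    exact_mod_cast j.isLt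
  have hsingle : (Polynomial.aeval M ((Polynomial.X : Polynomial K) ^ (j : ℕ))).mulVec
      (Pi.single ⟨0, hpos⟩ 1) = Pi.single j 1 := by
    rw [col0 hpos hq hn, hXj]
    funext i'
    rw [Polynomial.coeff_X_pow, Pi.single_apply]
    by_cases h : i' = j
    · simp [h]
    · have : (i' : ℕ) ≠ (j : ℕ) := fun hh => h (Fin.ext hh)
      simp [h, this]
  calc (Polynomial.aeval M q) i j
      = ((Polynomial.aeval M q).mulVec (Pi.single j 1)) i := by
        rw [Matrix.mulVec_single]
        simp
    _ = ((Polynomial.aeval M q).mulVec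
          ((Polynomial.aeval M ((Polynomial.X : Polynomial K) ^ (j : ℕ))).mulVec (Pi.single ⟨0, hpos⟩ 1))) i := by
        rw [hsingle]
    _ = ((Polynomial.aeval M (q * (Polynomial.X : Polynomial K) ^ (j : ℕ))).mulVec (Pi.single ⟨0, hpos⟩ 1)) i := by
        rw [_root_.map_mul, Matrix.mulVec_mulVec]
    _ = ((q * Polynomial.X ^ (j : ℕ)) %ₘ q).coeff (i : ℕ) := by
        rw [col0 hpos hq hn]
    _ = 0 := by
        rw [Polynomial.self_mul_modByMonic hq, Polynomial.coeff_zero]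

lemma aeval_entry {K : Type*} [Field K] {n : ℕ} (hpos : 0 < n) {q : Polynomial K}
    (hq : q.Monic) (hn : q.natDegree = n) (f : Polynomial K) (i : Fin n) :
    (Polynomial.aeval (companionMatrix n q) f) i ⟨0, hpos⟩ = (f %ₘ q).coeff (i : ℕ) := by
  have := congrFun (col0 hpos hq hn f) i
  rw [Matrix.mulVec_single] at this
  simpa using this

lemma aeval_eq_aeval_mod {K : Type*} [Field K] {n : ℕ} (hpos : 0 < n) {q : Polynomial K}
    (hq : q.Monic) (hn : q.natDegree = n) (f : Polynomial K) :
    Polynomial.aeval (companionMatrix n q) f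
      = Polynomial.aeval (companionMatrix n q) (f %ₘ q) := by
  conv_lhs => rw [← Polynomial.modByMonic_add_div f q]
  rw [map_add, _root_.map_mul, aeval_self_companion hpos hq hn, zero_mul, add_zero]

lemma companion_map {D K : Type*} [CommRing D] [CommRing K] (φ : D →+* K) (n : ℕ)
    (p : Polynomial D) :
    (companionMatrix n p).map φ = companionMatrix n (p.map φ) := by
  ext i j
  simp only [companionMatrix, Matrix.map_apply, Matrix.of_apply]
  split_ifs with h1 h2 <;> simp [Polynomial.coeff_map]

lemma aeval_map_companion {D K : Type*} [CommRing D] [CommRing K] [Algebra D K] (n : ℕ)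
    (p g : Polynomial D) :
    (Polynomial.aeval (companionMatrix n p) g).map (algebraMap D K)
      = Polynomial.aeval (companionMatrix n (p.map (algebraMap D K)))
          (g.map (algebraMap D K)) := by
  rw [Polynomial.aeval_map_algebraMap, ← companion_map]
  have := (Polynomial.aeval_algHom_apply ((Algebra.ofId D K).mapMatrix
      (m := Fin n)) (companionMatrix n p) g).symm
  have hc : ⇑(Algebra.ofId D K) = ⇑(algebraMap D K) := funext fun r => by simp [Algebra.ofId_apply]
  simpa [AlgHom.mapMatrix_apply, Algebra.ofId_apply, hc] using this


/-- Let `D` be an integral domain with quotient field `K`, `p ∈ D[X]` monic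
of degree `n`, and `C_p ∈ M_n(D)` the companion matrix of `p`.  Then
`Int(D[C_p], M_n(D)) = Int(D[C_p], D[C_p])`: a polynomial `f ∈ K[X]` maps every element `N`
of the `D`-algebra `D[C_p] = {g(C_p) : g ∈ D[X]}` to a matrix with entries in `D` if and
only if it maps every such `N` into `D[C_p]` itself (values are computed in `M_n(K)`). -/
theorem stmt_5 (D : Type*) [CommRing D] [IsDomain D] (K : Type*) [Field K]
    [Algebra D K] [IsFractionRing D K] (n : ℕ) (p : Polynomial D)
    (hmonic : p.Monic) (hdeg : p.natDegree = n) :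
    {f : Polynomial K | ∀ N : Matrix (Fin n) (Fin n) D,
        (∃ g : Polynomial D, Polynomial.aeval (companionMatrix n p) g = N) →
        ∀ i j : Fin n,
          (Polynomial.aeval (N.map (algebraMap D K)) f) i j ∈ (algebraMap D K).range} =
      {f : Polynomial K | ∀ N : Matrix (Fin n) (Fin n) D,
        (∃ g : Polynomial D, Polynomial.aeval (companionMatrix n p) g = N) →
        ∃ h : Polynomial D,
          (Polynomial.aeval (companionMatrix n p) h).map (algebraMap D K) =
            Polynomial.aeval (N.map (algebraMap D K)) f} := by
  ext f
  simp only [Set.mem_setOf_eq]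
  constructor
  · intro H N hN
    obtain ⟨g, rfl⟩ := hN
    rcases Nat.eq_zero_or_pos n with h0 | hpos
    · subst h0
      exact ⟨0, by ext i j; exact i.elim0⟩
    have hqm : (p.map (algebraMap D K)).Monic := hmonic.map _
    have hqn : (p.map (algebraMap D K)).natDegree = n := by
      rw [hmonic.natDegree_map]; exact hdeg
    set φ := algebraMap D K with hφ
    set q := p.map φ with hqdef
    set M := companionMatrix n q with hMdef
    have hNmap : (Polynomial.aeval (companionMatrix n p) g).map φ
        = Polynomial.aeval M (g.map φ) := aeval_map_companion n p g
    set F := f.comp (g.map φ) with hF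
    have hFval : Polynomial.aeval M F
        = Polynomial.aeval ((Polynomial.aeval (companionMatrix n p) g).map φ) f := by
      rw [hNmap, hF, Polynomial.aeval_comp]
    have hcoeff : ∀ k : ℕ, (F %ₘ q).coeff k ∈ Set.range φ := by
      intro k
      by_cases hk : k < n
      · have hent := aeval_entry hpos hqm hqn F ⟨k, hk⟩
        rw [← hent, hFval]
        obtain ⟨d, hd⟩ :=
          H (Polynomial.aeval (companionMatrix n p) g) ⟨g, rfl⟩ ⟨k, hk⟩ ⟨0, hpos⟩
        exact ⟨d, hd⟩
      · have hz : (F %ₘ q).coeff k = 0 := by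
          apply Polynomial.coeff_eq_zero_of_degree_lt
          refine lt_of_lt_of_le (Polynomial.degree_modByMonic_lt F hqm) ?_
          rw [Polynomial.degree_eq_natDegree hqm.ne_zero, hqn]
          exact_mod_cast Nat.le_of_not_lt hk
        rw [hz]
        exact ⟨0, map_zero φ⟩
    have hl : (F %ₘ q) ∈ Polynomial.lifts φ :=
      (Polynomial.lifts_iff_coeff_lifts _).mpr hcoeff
    obtain ⟨R, hR⟩ := hl
    refine ⟨R, ?_⟩
    have hRmap : R.map φ = F %ₘ q := hR
    rw [aeval_map_companion n p R, ← hqdef, ← hMdef, hRmap,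
      ← aeval_eq_aeval_mod hpos hqm hqn, hFval]
  · intro H N hN i j
    obtain ⟨h, hh⟩ := H N hN
    rw [← hh, Matrix.map_apply]
    exact ⟨_, rfl⟩
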